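/- For ω-markings over a finite set P, any downward-closed set of markings (functions P → ℕ) is the downward closure of a finite set of ω-markings. -/

import Mathlib

/-- The ω-markings form an adequate domain of limits: over a finite set `P` of
places, every downward-closed set of markings `P → ℕ` is the downward closure
of a finite set of ω-markings `P → ℕ ∪ {ω}`. -/
theorem downward_closed_finite_basis {P : Type} [Fintype P] [DecidableEq P]
    (D : Set (P → ℕ))
    (hdc : ∀ m ∈ D, ∀ m' : P → ℕ, (∀ p, m' p ≤ m p) → m' ∈ D) :
    ∃ M : Finset (P → WithTop ℕ),
      D = {m' : P → ℕ | ∃ m ∈ M, ∀ p, ((m' p : ℕ) : WithTop ℕ) ≤ m p} := by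
  classical
  -- the complement of D
  set U : Set (P → ℕ) := Dᶜ with hU
  -- well-foundedness of < on P → ℕ
  have piPWO : ∀ s : Set (P → ℕ), s.IsPWO := fun s =>
    Set.isPWO_of_wellQuasiOrderedLE s
  have hwf : WellFounded ((· < ·) : (P → ℕ) → (P → ℕ) → Prop) := by
    have := (piPWO Set.univ).isWF
    rw [Set.isWF_univ_iff] at this
    exact wellFounded_lt
  -- set of minimal elements of U
  set B : Set (P → ℕ) := {b | b ∈ U ∧ ∀ x ∈ U, ¬ x < b} with hB
  -- every element of U is above a minimal element
  have hmin : ∀ u ∈ U, ∃ b ∈ B, b ≤ u := by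
    intro u hu
    obtain ⟨b, ⟨hbU, hbu⟩, hbmin⟩ :=
      hwf.has_min {x | x ∈ U ∧ x ≤ u} ⟨u, hu, le_rfl⟩
    refine ⟨b, ⟨hbU, fun x hx hxb => hbmin x ⟨hx, hxb.le.trans hbu⟩ hxb⟩, hbu⟩
  -- B is a finite antichain
  have hanti : IsAntichain (· ≤ ·) B := by
    intro b hb c hc hne hle
    exact hc.2 b hb.1 (lt_of_le_of_ne hle hne)
  have hBfin : B.Finite :=
    hanti.finite_of_partiallyWellOrderedOn (piPWO B)
  set Bf : Finset (P → ℕ) := hBfin.toFinset with hBfdef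
  -- membership in D characterization
  have hDchar : ∀ m : P → ℕ, m ∈ D ↔ ∀ b ∈ Bf, ∃ p, m p < b p := by
    intro m
    constructor
    · intro hm b hb
      have hbB : b ∈ B := hBfin.mem_toFinset.mp hb
      by_contra h
      push_neg at h
      exact hbB.1 (hdc m hm b h)
    · intro h
      by_contra hm
      obtain ⟨b, hbB, hble⟩ := hmin m hm
      obtain ⟨p, hp⟩ := h b (hBfin.mem_toFinset.mpr hbB)
      exact absurd (hble p) (not_le.mpr hp)
  -- the ω-marking associated to a choice function
  let gfun : (Bf → P) → (P → WithTop ℕ) := fun f p =>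
    (Finset.univ.filter (fun b : Bf => f b = p)).inf
      (fun b => (((b : P → ℕ) (f b) - 1 : ℕ) : WithTop ℕ))
  -- valid choice functions
  let valid : Finset (Bf → P) :=
    Finset.univ.filter (fun f => ∀ b : Bf, 1 ≤ (b : P → ℕ) (f b))
  refine ⟨valid.image gfun, ?_⟩
  ext m
  simp only [Set.mem_setOf_eq, Finset.mem_image]
  constructor
  · intro hm
    have h := (hDchar m).mp hm
    choose fp hfp using fun b : Bf => h b b.2
    refine ⟨gfun fp, ⟨fp, ?_, rfl⟩, ?_⟩
    · simp only [valid, Finset.mem_filter, Finset.mem_univ, true_and]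
      intro b
      exact Nat.one_le_iff_ne_zero.mpr (Nat.pos_of_ne_zero (fun h0 => by
        have := hfp b; omega)).ne'
    · intro p
      refine Finset.le_inf ?_
      intro b hbmem
      simp only [Finset.mem_filter, Finset.mem_univ, true_and] at hbmem
      subst hbmem
      exact_mod_cast Nat.le_sub_one_of_lt (hfp b)
  · rintro ⟨g, ⟨f, hfvalid, rfl⟩, hle⟩
    simp only [valid, Finset.mem_filter, Finset.mem_univ, true_and] at hfvalid
    rw [hDchar]
    intro b hb
    refine ⟨f ⟨b, hb⟩, ?_⟩
    have h1 := hle (f ⟨b, hb⟩)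
    have h2 : ((m (f ⟨b, hb⟩) : ℕ) : WithTop ℕ) ≤
        ((b (f ⟨b, hb⟩) - 1 : ℕ) : WithTop ℕ) := by
      refine le_trans h1 ?_
      simp only [gfun]
      exact Finset.inf_le (b := (⟨b, hb⟩ : Bf)) (by simp)
    have h3 : m (f ⟨b, hb⟩) ≤ b (f ⟨b, hb⟩) - 1 := by exact_mod_cast h2
    have h4 : 1 ≤ b (f ⟨b, hb⟩) := hfvalid ⟨b, hb⟩
    omega
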